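/- arXiv:2101.02781 — 2 statements merged into one kernel-verified Lean document; each statement's English description precedes it below -/
import Mathlib

section
/- The semidirect product on pairs of square max-plus matrices defined by (M,G)·(A,H) = (M ⊕ A ⊕ H ⊕ (M ⊗ H), G ∘ H) is associative: [(M,G)·(A,H)]·(B,J) = (M,G)·[(A,H)·(B,J)]. -/
open Finset

abbrev Rmax : Type := WithBot ℝ

/-- Tropical (max-plus) matrix product. -/
noncomputable def trMul {l m n : ℕ} (A : Matrix (Fin l) (Fin m) Rmax) (B : Matrix (Fin m) (Fin n) Rmax) :
    Matrix (Fin l) (Fin n) Rmax :=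
  fun i j => univ.sup fun k => A i k + B k j

/-- Entrywise tropical sum (max) of matrices. -/
noncomputable def trSup {m n : ℕ} (A B : Matrix (Fin m) (Fin n) Rmax) : Matrix (Fin m) (Fin n) Rmax :=
  fun i j => A i j ⊔ B i j

/-- Tropical identity matrix. -/
noncomputable def trId (d : ℕ) : Matrix (Fin d) (Fin d) Rmax := fun i j => if i = j then 0 else ⊥

/-- Tropical matrix powers, `trPow A 0 = I`. -/
noncomputable def trPow {d : ℕ} (A : Matrix (Fin d) (Fin d) Rmax) : ℕ → Matrix (Fin d) (Fin d) Rmax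
  | 0 => trId d
  | n + 1 => trMul (trPow A n) A

/-- Adjoint product `A ∘ B = A ⊕ B ⊕ (A ⊗ B)`. -/
noncomputable def adj {d : ℕ} (A B : Matrix (Fin d) (Fin d) Rmax) : Matrix (Fin d) (Fin d) Rmax :=
  trSup (trSup A B) (trMul A B)

/-- Adjoint powers: `adjPow A n = A^{∘n}` for `n ≥ 1` (value at 0 is junk `A`). -/
noncomputable def adjPow {d : ℕ} (A : Matrix (Fin d) (Fin d) Rmax) : ℕ → Matrix (Fin d) (Fin d) Rmax
  | 0 => A
  | 1 => A
  | n + 2 => adj (adjPow A (n + 1)) A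

/-- Semidirect product of pairs:
`(M,G)·(A,H) = (M ⊕ A ⊕ H ⊕ (M ⊗ H), G ∘ H)`. -/
noncomputable def sd {d : ℕ} (p q : Matrix (Fin d) (Fin d) Rmax × Matrix (Fin d) (Fin d) Rmax) :
    Matrix (Fin d) (Fin d) Rmax × Matrix (Fin d) (Fin d) Rmax :=
  (trSup (trSup (trSup p.1 q.1) q.2) (trMul p.1 q.2), adj p.2 q.2)

/-- Semidirect powers: `sdPow p n = p^n` for `n ≥ 1` (value at 0 is junk `p`). -/
noncomputable def sdPow {d : ℕ} (p : Matrix (Fin d) (Fin d) Rmax × Matrix (Fin d) (Fin d) Rmax) :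
    ℕ → Matrix (Fin d) (Fin d) Rmax × Matrix (Fin d) (Fin d) Rmax
  | 0 => p
  | 1 => p
  | n + 2 => sd (sdPow p (n + 1)) p

/-- Maximum cycle mean `λ(F)`: maximum over cycles `(c 0, c 1, …, c k, c 0)` of
the average arc weight. -/
noncomputable def mcm {d : ℕ} (F : Matrix (Fin d) (Fin d) Rmax) : Rmax :=
  univ.sup fun kc : Σ k : Fin d, Fin (k.1 + 1) → Fin d =>
    (∑ i, F (kc.2 i) (kc.2 (i + 1))).map fun w => w / ((kc.1 : ℕ) + 1)

/-- Metric matrix `A⁺ = A ⊕ A^{⊗2} ⊕ ⋯ ⊕ A^{⊗d}`. -/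
noncomputable def metric {d : ℕ} (A : Matrix (Fin d) (Fin d) Rmax) : Matrix (Fin d) (Fin d) Rmax :=
  fun i j => (Finset.Icc 1 d).sup fun k => trPow A k i j

/-- Kleene star `A* = I ⊕ A ⊕ ⋯ ⊕ A^{⊗(d-1)}`. -/
noncomputable def kstar {d : ℕ} (A : Matrix (Fin d) (Fin d) Rmax) : Matrix (Fin d) (Fin d) Rmax :=
  fun i j => (Finset.range d).sup fun k => trPow A k i j

/-- `F` is irreducible: its weighted digraph is strongly connected. -/
def TrIrreducible {d : ℕ} (F : Matrix (Fin d) (Fin d) Rmax) : Prop :=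
  ∀ i j : Fin d, Relation.ReflTransGen (fun a b => F a b ≠ ⊥) i j

lemma add_sup' (a b c : Rmax) : a + (b ⊔ c) = (a + b) ⊔ (a + c) := by
  rcases le_total b c with h | h
  · rw [sup_eq_right.2 h, sup_eq_right.2 (add_le_add_right h a)]
  · rw [sup_eq_left.2 h, sup_eq_left.2 (add_le_add_right h a)]

lemma sup_add' (a b c : Rmax) : (a ⊔ b) + c = (a + c) ⊔ (b + c) := by
  rw [add_comm, add_sup', add_comm c a, add_comm c b]

lemma finsup_add {n : ℕ} (f : Fin n → Rmax) (c : Rmax) :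
    Finset.univ.sup f + c = Finset.univ.sup fun k => f k + c := by
  induction (Finset.univ : Finset (Fin n)) using Finset.cons_induction with
  | empty => simp
  | cons a s ha ih => simp [Finset.sup_cons, sup_add', ih]

lemma add_finsup {n : ℕ} (f : Fin n → Rmax) (c : Rmax) :
    c + Finset.univ.sup f = Finset.univ.sup fun k => c + f k := by
  rw [add_comm, finsup_add]; simp [add_comm]

lemma trSup_comm {m n : ℕ} (A B : Matrix (Fin m) (Fin n) Rmax) : trSup A B = trSup B A := by
  funext i j; exact sup_comm _ _

lemma trSup_assoc {m n : ℕ} (A B C : Matrix (Fin m) (Fin n) Rmax) :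
    trSup (trSup A B) C = trSup A (trSup B C) := by
  funext i j; exact sup_assoc _ _ _

lemma trSup_left_comm {m n : ℕ} (A B C : Matrix (Fin m) (Fin n) Rmax) :
    trSup A (trSup B C) = trSup B (trSup A C) := by
  funext i j; exact sup_left_comm _ _ _

lemma trSup_idem {m n : ℕ} (A : Matrix (Fin m) (Fin n) Rmax) : trSup A A = A := by
  funext i j; exact sup_idem _

lemma trSup_left_idem {m n : ℕ} (A B : Matrix (Fin m) (Fin n) Rmax) :
    trSup A (trSup A B) = trSup A B := by
  funext i j; exact sup_left_idem _ _

lemma trMul_trSup_right {l m n : ℕ} (A : Matrix (Fin l) (Fin m) Rmax)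
    (B C : Matrix (Fin m) (Fin n) Rmax) :
    trMul A (trSup B C) = trSup (trMul A B) (trMul A C) := by
  funext i j
  show Finset.univ.sup (fun k => A i k + (B k j ⊔ C k j)) = _
  simp only [add_sup']
  exact Finset.sup_sup

lemma trMul_trSup_left {l m n : ℕ} (A B : Matrix (Fin l) (Fin m) Rmax)
    (C : Matrix (Fin m) (Fin n) Rmax) :
    trMul (trSup A B) C = trSup (trMul A C) (trMul B C) := by
  funext i j
  show Finset.univ.sup (fun k => (A i k ⊔ B i k) + C k j) = _
  simp only [sup_add']
  exact Finset.sup_sup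

lemma trMul_assoc {l m n o : ℕ} (A : Matrix (Fin l) (Fin m) Rmax)
    (B : Matrix (Fin m) (Fin n) Rmax) (C : Matrix (Fin n) (Fin o) Rmax) :
    trMul (trMul A B) C = trMul A (trMul B C) := by
  funext i j
  show Finset.univ.sup (fun k => Finset.univ.sup (fun s => A i s + B s k) + C k j)
      = Finset.univ.sup (fun s => A i s + Finset.univ.sup fun k => B s k + C k j)
  simp only [finsup_add, add_finsup, add_assoc]
  exact Finset.sup_comm _ _ _

theorem sd_assoc {d : ℕ} (M G A H B J : Matrix (Fin d) (Fin d) Rmax) :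
    sd (sd (M, G) (A, H)) (B, J) = sd (M, G) (sd (A, H) (B, J)) := by
  simp only [sd, adj, Prod.mk.injEq]
  constructor <;>
  · simp only [trMul_trSup_left, trMul_trSup_right, trMul_assoc]
    simp only [trSup_assoc, trSup_comm, trSup_left_comm, trSup_idem, trSup_left_idem]
end

section
/- Let M, H be d×d max-plus matrices and let A^{(k)} denote the first component of the semidirect power (M,H)^k. If m > n ≥ 2, then A^{(m)} ≥ A^{(n)} entrywise; conversely, if A^{(m)} > A^{(n)} (entrywise ≥ and not equal), then m > n. -/
open Finset

lemma sdPow_step {d : ℕ} (p : Matrix (Fin d) (Fin d) Rmax × Matrix (Fin d) (Fin d) Rmax)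
    (k : ℕ) (i j : Fin d) : (sdPow p k).1 i j ≤ (sdPow p (k + 1)).1 i j := by
  cases k with
  | zero => simp [sdPow]
  | succ k =>
      show (sdPow p (k + 1)).1 i j ≤ (sd (sdPow p (k + 1)) p).1 i j
      simp only [sd, trSup]
      exact le_sup_of_le_left (le_sup_of_le_left le_sup_left)

lemma sdPow_mono {d : ℕ} (p : Matrix (Fin d) (Fin d) Rmax × Matrix (Fin d) (Fin d) Rmax)
    {n m : ℕ} (h : n ≤ m) (i j : Fin d) : (sdPow p n).1 i j ≤ (sdPow p m).1 i j := by
  induction m with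
  | zero => simp [Nat.le_zero.mp h]
  | succ m ih =>
      rcases Nat.lt_or_ge n (m + 1) with h' | h'
      · exact (ih (Nat.lt_succ_iff.mp h')).trans (sdPow_step p m i j)
      · have : n = m + 1 := le_antisymm h h'
        simp [this]

theorem sdPow_fst_monotone {d : ℕ} (M H : Matrix (Fin d) (Fin d) Rmax) (m n : ℕ)
    (hm : 2 ≤ m) (hn : 2 ≤ n) :
    (m > n → ∀ i j, (sdPow (M, H) n).1 i j ≤ (sdPow (M, H) m).1 i j) ∧
      (((∀ i j, (sdPow (M, H) n).1 i j ≤ (sdPow (M, H) m).1 i j) ∧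
          (sdPow (M, H) m).1 ≠ (sdPow (M, H) n).1) → m > n) := by
  constructor
  · intro h i j
    exact sdPow_mono _ h.le i j
  · rintro ⟨hle, hne⟩
    by_contra h
    push_neg at h
    apply hne
    funext i j
    exact le_antisymm (sdPow_mono _ h i j) (hle i j)
end
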